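/- Let V be a finite-dimensional real vector space equipped with a nondegenerate skew-symmetric bilinear form ω, let g be a finite-dimensional real vector space, let a : g → V be a linear map, and define μ : V → g* by μ(u)(v) := ω(a(v), u). Assume that the image of a is isotropic, i.e. ω(a(v), a(w)) = 0 for all v, w ∈ g. Then the radical of the restriction of ω to ker μ equals the image of a; that is, {u ∈ ker μ : ω(u, u') = 0 for all u' ∈ ker μ} = a(g). -/

import Mathlib

/-- Let `V` be a finite-dimensional real vector space equipped with a nondegenerate
skew-symmetric bilinear form `ω`, let `g` be a finite-dimensional real vector space,
let `a : g → V` be a linear map, and define `μ : V → g*` by `μ(u)(v) := ω(a(v), u)`.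
Assume that the image of `a` is isotropic.  Then the radical of the restriction of `ω`
to `ker μ` equals the image of `a`. -/
theorem radical_of_restriction_eq_image
    {V g : Type*} [AddCommGroup V] [Module ℝ V] [FiniteDimensional ℝ V]
    [AddCommGroup g] [Module ℝ g] [FiniteDimensional ℝ g]
    (ω : V →ₗ[ℝ] V →ₗ[ℝ] ℝ)
    (hskew : ∀ u v : V, ω u v = - ω v u)
    (hnd : ∀ u : V, (∀ v : V, ω u v = 0) → u = 0)
    (a : g →ₗ[ℝ] V)
    (μ : V →ₗ[ℝ] Module.Dual ℝ g)
    (hμ : ∀ (u : V) (v : g), μ u v = ω (a v) u)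
    (hiso : ∀ v w : g, ω (a v) (a w) = 0) :
    {u : V | u ∈ LinearMap.ker μ ∧ ∀ u' ∈ LinearMap.ker μ, ω u u' = 0}
      = Set.range a := by
  have hrefl : ω.IsRefl := fun x y h => by rw [hskew y x, h, neg_zero]
  have hndg : LinearMap.BilinForm.Nondegenerate ω := (LinearMap.IsRefl.nondegenerate_iff_separatingLeft hrefl).mpr fun u h => hnd u h
  have hker : LinearMap.ker μ = LinearMap.BilinForm.orthogonal ω (LinearMap.range a) := by
    ext u
    constructor
    · rintro hu _ ⟨v, rfl⟩
      have := LinearMap.congr_fun (LinearMap.mem_ker.mp hu) v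
      simpa [hμ] using this
    · intro hu
      refine LinearMap.mem_ker.mpr (LinearMap.ext fun v => ?_)
      have := hu (a v) ⟨v, rfl⟩
      simpa [hμ] using this
  ext u
  simp only [Set.mem_setOf_eq]
  constructor
  · rintro ⟨hu, hu'⟩
    have : u ∈ LinearMap.BilinForm.orthogonal ω (LinearMap.ker μ) := fun n hn => hrefl _ _ (hu' n hn)
    rw [hker, LinearMap.BilinForm.orthogonal_orthogonal hndg hrefl] at this
    obtain ⟨v, rfl⟩ := this
    exact ⟨v, rfl⟩
  · rintro ⟨v, rfl⟩
    constructor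
    · rw [hker]
      rintro _ ⟨w, rfl⟩
      exact hiso w v
    · intro u' hu'
      rw [hker] at hu'
      exact hu' (a v) ⟨v, rfl⟩
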